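/- The poset [2] × [5] has a subposet that can be contracted onto a poset of type D̃₄: specifically, the subposet obtained by removing the elements (1,1) and (2,5) admits a surjective order-preserving map with connected fibers onto the 5-element poset {a₁, a₂, d, b₁, b₂} with a₁ < d, a₂ < d, d < b₁, d < b₂ and no other strict relations. -/

import Mathlib

open Function

/-- The comparability graph of a poset. -/
def compGraph (P : Type*) [PartialOrder P] : SimpleGraph P where
  Adj x y := x ≠ y ∧ (x ≤ y ∨ y ≤ x)
  symm := ⟨fun x y h => ⟨h.1.symm, h.2.symm⟩⟩
  loopless := ⟨fun x h => h.1 rfl⟩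

/-- A contraction of posets: a surjective monotone map with connected fibers. -/
def IsContraction {P Q : Type*} [PartialOrder P] [PartialOrder Q] (c : P → Q) : Prop :=
  Monotone c ∧ Function.Surjective c ∧
    ∀ q : Q, ((compGraph P).induce (c ⁻¹' {q})).Connected

/-- An elementary contraction: exactly one fiber has two elements, all others are singletons. -/
def IsElementaryContraction {P Q : Type*} [PartialOrder P] [PartialOrder Q] (c : P → Q) : Prop :=
  IsContraction c ∧
    ∃ x : Q, (c ⁻¹' {x}).ncard = 2 ∧ ∀ r : Q, r ≠ x → (c ⁻¹' {r}).ncard = 1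

/-- The `D̃₄`-poset: a middle element `d`, two incomparable elements `a₁, a₂` below it and two
incomparable elements `b₁, b₂` above it. -/
inductive DtildeFour : Type
  | a1 | a2 | d | b1 | b2
deriving DecidableEq

instance instFintypeDtildeFour : Fintype DtildeFour where
  elems := {.a1, .a2, .d, .b1, .b2}
  complete := by intro x; cases x <;> decide

/-- The rank of an element of the `D̃₄`-poset. -/
def DtildeFour.rank : DtildeFour → ℕ
  | .a1 => 0 | .a2 => 0 | .d => 1 | .b1 => 2 | .b2 => 2

instance : PartialOrder DtildeFour where
  le x y := x = y ∨ x.rank < y.rank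
  le_refl := by exact (by decide : ∀ a : DtildeFour, a = a ∨ a.rank < a.rank)
  le_trans := by exact (by decide : ∀ a b c : DtildeFour,
    (a = b ∨ a.rank < b.rank) → (b = c ∨ b.rank < c.rank) → (a = c ∨ a.rank < c.rank))
  le_antisymm := by exact (by decide : ∀ a b : DtildeFour,
    (a = b ∨ a.rank < b.rank) → (b = a ∨ b.rank < a.rank) → a = b)

instance : DecidableRel (α := DtildeFour) (· ≤ ·) := fun a b =>
  decidable_of_iff (a = b ∨ a.rank < b.rank) Iff.rfl

abbrev P25 := {x : Fin 2 × Fin 5 // x ≠ (0, 0) ∧ x ≠ (1, 4)}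

def cmap (x : P25) : DtildeFour :=
  if x.1 = (0,1) then .a1
  else if x.1 = (1,0) then .a2
  else if x.1 = (0,4) then .b1
  else if x.1 = (1,3) then .b2
  else .d

instance : DecidableRel (compGraph P25).Adj := fun x y =>
  decidable_of_iff (x ≠ y ∧ (x ≤ y ∨ y ≤ x)) Iff.rfl

instance (s : Set P25) [DecidablePred (· ∈ s)] :
    DecidableRel ((compGraph P25).induce s).Adj := fun a b =>
  decidable_of_iff ((compGraph P25).Adj a b) Iff.rfl

instance (q : DtildeFour) : DecidablePred (· ∈ cmap ⁻¹' {q}) := fun a =>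
  decidable_of_iff (cmap a = q) Iff.rfl

theorem pre_of_three {V : Type*} (G : SimpleGraph V)
    (h : ∀ u v : V, ∃ a b : V, (u = a ∨ G.Adj u a) ∧ (a = b ∨ G.Adj a b) ∧ (b = v ∨ G.Adj b v)) :
    G.Preconnected := by
  intro u v
  obtain ⟨a, b, h1, h2, h3⟩ := h u v
  have r : ∀ x y, (x = y ∨ G.Adj x y) → G.Reachable x y := by
    rintro x y (rfl | h)
    exacts [SimpleGraph.Reachable.refl _, h.reachable]
  exact (r _ _ h1).trans ((r _ _ h2).trans (r _ _ h3))

theorem mono : ∀ a b : P25, a ≤ b → cmap a ≤ cmap b := by decide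

set_option synthInstance.maxHeartbeats 400000 in
set_option synthInstance.maxSize 1024 in
/-- The subposet of `[2] × [5]` obtained by removing the minimum `(1,1)` and the maximum
`(2,5)` admits a contraction onto the `D̃₄`-poset. -/
theorem two_times_five_minus_ends_contracts_onto_DtildeFour :
    ∃ c : {x : Fin 2 × Fin 5 // x ≠ (0, 0) ∧ x ≠ (1, 4)} → DtildeFour,
      IsContraction c := by
  refine ⟨cmap, fun a b h => mono a b h, (by decide), ?_⟩
  intro q
  rw [SimpleGraph.connected_iff]
  refine ⟨pre_of_three _ (by revert q; decide), ?_⟩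
  obtain ⟨a, ha⟩ := (by decide : Function.Surjective cmap) q
  exact ⟨⟨a, ha⟩⟩
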